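/- Let n ≥ 1 and let 𝕋 = ℝ ∪ {∞} with the topology making x ↦ e^{−x} a homeomorphism onto [0,∞). The additive group (ℝ,+) acts on 𝕋^n ∖ {(∞,…,∞)} by λ·(x₁,…,xₙ) = (x₁+λ,…,xₙ+λ) (with ∞+λ = ∞). The quotient space (𝕋^n ∖ {(∞,…,∞)})/ℝ, with the quotient topology, is homeomorphic to the standard (n−1)-simplex Δ^{n−1} = {t ∈ ℝ^n : tᵢ ≥ 0 for all i, Σᵢ tᵢ = 1}. -/
import Mathlib


open Finset

noncomputable section

/-! ### Alternating functions and oriented tropical Plücker vectors -/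

/-- A function `Φ : E^d → ℝ` is alternating. -/
def IsAlternating {E : Type*} {d : ℕ} (Φ : (Fin d → E) → ℝ) : Prop :=
  (∀ (σ : Equiv.Perm (Fin d)) (x : Fin d → E),
      Φ (x ∘ σ) = ((Equiv.Perm.sign σ : ℤ) : ℝ) * Φ x) ∧
  ∀ x : Fin d → E, ¬ Function.Injective x → Φ x = 0

/-- The `i`-th term `(-1)^i · Φ(x₁,…,x̂ᵢ,…,x_{d+1}) · Φ(xᵢ,y₁,…,y_{d-1})` of the
oriented (tropical) Plücker relation attached to tuples `X ∈ E^{d+1}`, `Y ∈ E^{d-1}`. -/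
def delTerm {E : Type*} {d n : ℕ} (hn : d = n + 1) (Φ : (Fin d → E) → ℝ)
    (X : Fin (d + 1) → E) (Y : Fin n → E) (i : Fin (d + 1)) : ℝ :=
  (-1 : ℝ) ^ (i : ℕ) * Φ (X ∘ i.succAbove) * Φ (Fin.cons (X i) Y ∘ Fin.cast hn)

/-- `Φ : E^d → ℝ` is an oriented tropical Plücker vector of rank `d` on `E`:
it is alternating, not identically zero, and for every `X ∈ E^{d+1}`, `Y ∈ E^{d-1}`
the list of terms of the Plücker relation is identically zero or its maximum absolute
value is attained both at a positive entry and at a negative entry. -/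
def IsOrientedTP {E : Type*} (d : ℕ) (Φ : (Fin d → E) → ℝ) : Prop :=
  IsAlternating Φ ∧ (∃ x, Φ x ≠ 0) ∧
  ∀ (n : ℕ) (hn : d = n + 1) (X : Fin (d + 1) → E) (Y : Fin n → E),
    (∀ i, delTerm hn Φ X Y i = 0) ∨
    ∃ ip im : Fin (d + 1),
      0 < delTerm hn Φ X Y ip ∧ delTerm hn Φ X Y im < 0 ∧
      (∀ k, |delTerm hn Φ X Y k| ≤ delTerm hn Φ X Y ip) ∧
      ∀ k, |delTerm hn Φ X Y k| ≤ -delTerm hn Φ X Y im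

/-- `M̃(d,E)`: the space of oriented tropical Plücker vectors of rank `d` on `E`,
as a subset of `ℝ^{E^d}`. -/
def Mt (d : ℕ) (E : Type*) : Set ((Fin d → E) → ℝ) := {Φ | IsOrientedTP d Φ}

open Classical in
/-- Pushforward of `Φ : E^d → ℝ` along an (injective) map `α : E → F`. -/
noncomputable def pushforward {E F : Type*} {d : ℕ} (α : E → F) (Φ : (Fin d → E) → ℝ) :
    (Fin d → F) → ℝ :=
  fun y => if h : ∃ x : Fin d → E, ∀ i, y i = α (x i) then Φ h.choose else 0

/-! ### Finsets, ordered tuples, evaluation -/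

/-- The increasing enumeration of a `d`-element finite subset of a linearly ordered set. -/
def finsetTuple {E : Type*} [LinearOrder E] {d : ℕ} (B : Finset E) (h : B.card = d) :
    Fin d → E :=
  fun i => (B.orderIsoOfFin h i : E)

/-- Evaluation of an alternating function on a finite set, via its increasing enumeration
(and `0` if the set does not have the right cardinality). -/
noncomputable def evalOn {E : Type*} [LinearOrder E] {d : ℕ} (χ : (Fin d → E) → ℝ)
    (B : Finset E) : ℝ :=
  if h : B.card = d then χ (finsetTuple B h) else 0

/-! ### Tropical numbers and valuated matroids -/

/-- `−log|x| ∈ 𝕋 = ℝ ∪ {∞}` (with `−log 0 = ∞`). -/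
noncomputable def negLogAbs (x : ℝ) : WithTop ℝ :=
  if x = 0 then ⊤ else ((- Real.log |x| : ℝ) : WithTop ℝ)

/-- The map `𝕋 → ℝ`, `x ↦ e^{−x}` (with `∞ ↦ 0`); it is injective with image `[0,∞)`,
so the topology on `𝕋` making it a homeomorphism onto `[0,∞)` is the topology induced by it. -/
noncomputable def tropToReal : WithTop ℝ → ℝ :=
  WithTop.recTopCoe 0 fun r => Real.exp (-r)

/-- `I_φ(X,Y)`: the set of `i ∈ X \ Y` attaining the minimum of `φ(X∖{i}) + φ(Y∪{i})`. -/
def argminSet {E : Type*} [DecidableEq E] (φ : Finset E → WithTop ℝ) (X Y : Finset E) :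
    Set E :=
  {i | i ∈ X \ Y ∧ ∀ j ∈ X \ Y,
    φ (X.erase i) + φ (insert i Y) ≤ φ (X.erase j) + φ (insert j Y)}

/-- `φ` is a tropical Plücker vector of rank `d`: not identically `∞` on `binom(E,d)`,
and each `I_φ(X,Y)` has cardinality at least `2`. -/
def IsTropPlucker {E : Type*} [DecidableEq E] (d : ℕ) (φ : Finset E → WithTop ℝ) : Prop :=
  (∃ B : Finset E, B.card = d ∧ φ B ≠ ⊤) ∧
  ∀ X Y : Finset E, X.card = d + 1 → Y.card = d - 1 →
    ∃ i ∈ argminSet φ X Y, ∃ j ∈ argminSet φ X Y, i ≠ j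

/-- The (tropical) Plücker coordinates `B ↦ −log|Φ(B)|` of `Φ`. -/
noncomputable def tropOf {E : Type*} [LinearOrder E] {d : ℕ} (Φ : (Fin d → E) → ℝ) :
    Finset E → WithTop ℝ :=
  fun B => negLogAbs (evalOn Φ B)

/-! ### Chirotopes -/

/-- A chirotope of rank `d` on `E`: an alternating `{−1,0,+1}`-valued function,
not identically zero, satisfying the chirotope exchange condition. -/
def IsChirotope {E : Type*} (d : ℕ) (χ : (Fin d → E) → ℝ) : Prop :=
  (∀ x, χ x = -1 ∨ χ x = 0 ∨ χ x = 1) ∧ IsAlternating χ ∧ (∃ x, χ x ≠ 0) ∧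
  ∀ (n : ℕ) (hn : d = n + 1) (X : Fin (d + 1) → E) (Y : Fin n → E),
    (∀ k, delTerm hn χ X Y k = 0) ∨
    ((∃ k, delTerm hn χ X Y k = 1) ∧ ∃ k, delTerm hn χ X Y k = -1)

/-- Compatibility of a chirotope `χ` with a tropical Plücker vector `φ`:
`φ(B) = ∞` iff `χ(B) = 0`, and for every `X ∈ binom(E,d+1)`, `Y ∈ binom(E,d-1)`
(listed in increasing order) there exist indices `i, j` in the argmin set such that the
corresponding chirotope terms have opposite signs. -/
def ChiCompat {E : Type*} [LinearOrder E] (d : ℕ) (χ : (Fin d → E) → ℝ)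
    (φ : Finset E → WithTop ℝ) : Prop :=
  (∀ B : Finset E, B.card = d → (φ B = ⊤ ↔ evalOn χ B = 0)) ∧
  ∀ (n : ℕ) (hn : d = n + 1) (X Y : Finset E) (hX : X.card = d + 1) (hY : Y.card = n),
    ∃ i j : Fin (d + 1),
      (∀ k : Fin (d + 1),
        φ (X.erase (finsetTuple X hX i)) + φ (insert (finsetTuple X hX i) Y) ≤
          φ (X.erase (finsetTuple X hX k)) + φ (insert (finsetTuple X hX k) Y)) ∧
      (∀ k : Fin (d + 1),
        φ (X.erase (finsetTuple X hX j)) + φ (insert (finsetTuple X hX j) Y) ≤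
          φ (X.erase (finsetTuple X hX k)) + φ (insert (finsetTuple X hX k) Y)) ∧
      0 < delTerm hn χ (finsetTuple X hX) (finsetTuple Y hY) i ∧
      delTerm hn χ (finsetTuple X hX) (finsetTuple Y hY) j < 0

/-! ### The cells `C(p,I)` of the Dressian -/

/-- Membership in the cell `C(p,I)`: a tropical Plücker vector with underlying matroid `p`
and initial datum `I`. -/
def IsInC {E : Type*} [DecidableEq E] (d : ℕ) (p : Finset E → Bool)
    (I : Finset E → Finset E → Set E) (φ : Finset E → WithTop ℝ) : Prop :=
  IsTropPlucker d φ ∧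
  (∀ B : Finset E, B.card = d → (p B = true ↔ φ B ≠ ⊤)) ∧
  ∀ X Y : Finset E, X.card = d + 1 → Y.card = d - 1 → argminSet φ X Y = I X Y

/-- The support (set of bases) of a matroid `p : binom(E,d) → {0,1}`. -/
def suppSet {E : Type*} (d : ℕ) (p : Finset E → Bool) : Set (Finset E) :=
  {B | B.card = d ∧ p B = true}

open Classical in
/-- Extend a vector of finite coordinates on `supp(p)` to all of `binom(E,d)` by `∞`. -/
noncomputable def extendFin {E : Type*} (d : ℕ) (p : Finset E → Bool)
    (f : ↥(suppSet d p) → ℝ) : Finset E → WithTop ℝ :=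
  fun B => if h : B ∈ suppSet d p then ((f ⟨B, h⟩ : ℝ) : WithTop ℝ) else ⊤

/-- The cell `C(p,I)`, identified with a subset of `ℝ^{supp(p)}` by recording the finite
coordinates. -/
def CRealCoords {E : Type*} [DecidableEq E] (d : ℕ) (p : Finset E → Bool)
    (I : Finset E → Finset E → Set E) : Set (↥(suppSet d p) → ℝ) :=
  {f | IsInC d p I (extendFin d p f)}

/-- Extend `φ : binom(E,d) → 𝕋` to all finite subsets by `∞`. -/
noncomputable def extendTrop {E : Type*} (d : ℕ)
    (φ : {B : Finset E // B.card = d} → WithTop ℝ) : Finset E → WithTop ℝ :=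
  fun B => if h : B.card = d then φ ⟨B, h⟩ else ⊤

/-- The cell `C(p,I)` as a subset of `𝕋^{binom(E,d)}`. -/
def Cset {E : Type*} [DecidableEq E] (d : ℕ) (p : Finset E → Bool)
    (I : Finset E → Finset E → Set E) : Set ({B : Finset E // B.card = d} → WithTop ℝ) :=
  {φ | IsInC d p I (extendTrop d φ)}

/-- The set of tropical Plücker vectors inside `𝕋^{binom(E,d)}`. -/
def TPVset {E : Type*} [DecidableEq E] (d : ℕ) :
    Set ({B : Finset E // B.card = d} → WithTop ℝ) :=
  {φ | IsTropPlucker d (extendTrop d φ)}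

/-! ### Cells of the space of oriented valuated matroids -/

/-- The cell `D̃(χ,I)`: oriented tropical Plücker vectors with chirotope `χ` and
initial datum `I`. -/
def Dset {E : Type*} [LinearOrder E] (d : ℕ) (χ : (Fin d → E) → ℝ)
    (I : Finset E → Finset E → Set E) : Set ((Fin d → E) → ℝ) :=
  {Φ | IsOrientedTP d Φ ∧ (∀ x, Real.sign (Φ x) = χ x) ∧
    ∀ X Y : Finset E, X.card = d + 1 → Y.card = d - 1 → argminSet (tropOf Φ) X Y = I X Y}

/-- The Plücker coordinates of an alternating function, indexed by `binom(E,d)`. -/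
def toCoords {E : Type*} [LinearOrder E] (d : ℕ) (Φ : (Fin d → E) → ℝ) :
    {B : Finset E // B.card = d} → ℝ :=
  fun B => Φ (finsetTuple B.1 B.2)

/-- The cell `D̃(χ,I)` inside `ℝ^{binom(E,d)}`. -/
def DsetCoords {E : Type*} [LinearOrder E] (d : ℕ) (χ : (Fin d → E) → ℝ)
    (I : Finset E → Finset E → Set E) : Set ({B : Finset E // B.card = d} → ℝ) :=
  toCoords d '' Dset d χ I

/-- `M̃(d,E)` inside `ℝ^{binom(E,d)}`. -/
def MtCoords {E : Type*} [LinearOrder E] (d : ℕ) :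
    Set ({B : Finset E // B.card = d} → ℝ) :=
  toCoords d '' Mt d E

open Classical in
/-- The underlying matroid `|χ|` of a chirotope, as `binom(E,d) → {0,1}`. -/
noncomputable def chiSupp {E : Type*} [LinearOrder E] {d : ℕ} (χ : (Fin d → E) → ℝ) :
    Finset E → Bool :=
  fun B => if evalOn χ B = 0 then false else true

/-- Compatibility of an initial datum `I` with a chirotope `χ`. -/
def InitCompat {E : Type*} [LinearOrder E] (d : ℕ)
    (I : Finset E → Finset E → Set E) (χ : (Fin d → E) → ℝ) : Prop :=
  (∃ φ : Finset E → WithTop ℝ, IsTropPlucker d φ ∧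
      (∀ B : Finset E, B.card = d → (φ B ≠ ⊤ ↔ evalOn χ B ≠ 0)) ∧
      ∀ X Y : Finset E, X.card = d + 1 → Y.card = d - 1 → argminSet φ X Y = I X Y) ∧
  ∀ (n : ℕ) (hn : d = n + 1) (X Y : Finset E) (hX : X.card = d + 1) (hY : Y.card = n),
    (∀ k, delTerm hn χ (finsetTuple X hX) (finsetTuple Y hY) k = 0) ∨
    ∃ kp km : Fin (d + 1),
      finsetTuple X hX kp ∈ I X Y ∧ finsetTuple X hX km ∈ I X Y ∧
      delTerm hn χ (finsetTuple X hX) (finsetTuple Y hY) kp = 1 ∧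
      delTerm hn χ (finsetTuple X hX) (finsetTuple Y hY) km = -1

/-- The maximal initial datum `I_max^χ` compatible with a chirotope `χ`. -/
def Imax {E : Type*} [LinearOrder E] (d : ℕ) (χ : (Fin d → E) → ℝ) :
    Finset E → Finset E → Set E :=
  fun X Y => {x | x ∈ X \ Y ∧ |evalOn χ (X.erase x)| * |evalOn χ (insert x Y)| ≠ 0}

/-! ### The MacPhersonian as a preordered set -/

/-- `τ` is a specialization of `χ`: each Plücker coordinate of `τ` is the corresponding
coordinate of `χ` or `0`. -/
def SpecRel {E : Type*} [LinearOrder E] (d : ℕ) (χ τ : (Fin d → E) → ℝ) : Prop :=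
  ∀ B : Finset E, B.card = d → evalOn τ B = evalOn χ B ∨ evalOn τ B = 0

/-- The equivalence `χ ∼ −χ` on functions `E^d → ℝ`. -/
def ChiSetoid (E : Type*) (d : ℕ) : Setoid ((Fin d → E) → ℝ) where
  r χ τ := τ = χ ∨ τ = -χ
  iseqv := by
    refine ⟨fun x => Or.inl rfl, ?_, ?_⟩
    · rintro x y (rfl | rfl)
      · exact Or.inl rfl
      · exact Or.inr (neg_neg x).symm
    · rintro x y z (rfl | rfl) (rfl | rfl)
      · exact Or.inl rfl
      · exact Or.inr rfl
      · exact Or.inr rfl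
      · exact Or.inl (neg_neg x)

/-- The MacPhersonian: elements are equivalence classes `[χ]` of chirotopes of rank `d` on
`E` under `χ ∼ −χ`. -/
def MacP (E : Type*) (d : ℕ) : Type _ :=
  {q : Quotient (ChiSetoid E d) // ∃ χ, IsChirotope d χ ∧ Quotient.mk (ChiSetoid E d) χ = q}

lemma evalOn_neg {E : Type*} [LinearOrder E] {d : ℕ} (χ : (Fin d → E) → ℝ) (B : Finset E) :
    evalOn (-χ) B = -evalOn χ B := by
  unfold evalOn
  split <;> simp

/-- The specialization preorder on the MacPhersonian. -/
instance MacP.instPreorder (E : Type*) [LinearOrder E] (d : ℕ) : Preorder (MacP E d) where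
  le x y := ∃ a b : (Fin d → E) → ℝ,
    Quotient.mk (ChiSetoid E d) a = x.1 ∧ Quotient.mk (ChiSetoid E d) b = y.1 ∧ SpecRel d a b
  le_refl x := by
    obtain ⟨χ, hχ, hq⟩ := x.2
    exact ⟨χ, χ, hq, hq, fun B _ => Or.inl rfl⟩
  le_trans x y z hxy hyz := by
    obtain ⟨a, b, ha, hb, hab⟩ := hxy
    obtain ⟨b', c, hb', hc, hbc⟩ := hyz
    have comp : ∀ {u v w : (Fin d → E) → ℝ}, SpecRel d u v → SpecRel d v w → SpecRel d u w := by
      intro u v w h1 h2 B hB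
      rcases h2 B hB with h | h
      · rw [h]; exact h1 B hB
      · exact Or.inr h
    have hneg : ∀ {u v : (Fin d → E) → ℝ}, SpecRel d u v → SpecRel d (-u) (-v) := by
      intro u v h B hB
      rw [evalOn_neg, evalOn_neg]
      rcases h B hB with h1 | h1
      · exact Or.inl (by rw [h1])
      · exact Or.inr (by rw [h1, neg_zero])
    have hbb' : b = b' ∨ b = -b' := Quotient.exact (hb'.trans hb.symm)
    rcases hbb' with h | h
    · subst h
      exact ⟨a, c, ha, hc, comp hab hbc⟩
    · have h1 : SpecRel d b (-c) := by
        have := hneg hbc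
        rwa [← h] at this
      refine ⟨a, -c, ha, ?_, comp hab h1⟩
      rw [← hc]
      exact Quotient.sound (Or.inr (neg_neg c).symm)

/-! ### Projectivizations -/

/-- The scaling equivalence on a subset `S ⊆ ℝ^ι`. -/
def scalingSetoid {ι : Type*} (S : Set (ι → ℝ)) : Setoid ↥S where
  r f g := ∃ c : ℝ, c ≠ 0 ∧ (g : ι → ℝ) = c • (f : ι → ℝ)
  iseqv := by
    refine ⟨fun f => ⟨1, one_ne_zero, (one_smul ℝ _).symm⟩, ?_, ?_⟩
    · rintro f g ⟨c, hc, h⟩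
      exact ⟨c⁻¹, inv_ne_zero hc, by rw [h, smul_smul, inv_mul_cancel₀ hc, one_smul]⟩
    · rintro f g h ⟨c, hc, h1⟩ ⟨c', hc', h2⟩
      exact ⟨c' * c, mul_ne_zero hc' hc, by rw [h2, h1, smul_smul]⟩

/-! ### Matroids on the ground set ℕ -/

/-- `Φ : ℕ^d → ℝ` is finitely supported. -/
def FinSupp (d : ℕ) (Φ : (Fin d → ℕ) → ℝ) : Prop :=
  ∃ S : Finset ℕ, ∀ x : Fin d → ℕ, (∃ i, x i ∉ S) → Φ x = 0

/-- `M̃(d,ℕ)`: finitely supported oriented tropical Plücker vectors of rank `d` on `ℕ`. -/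
def MtN (d : ℕ) : Set ((Fin d → ℕ) → ℝ) := {Φ | IsOrientedTP d Φ ∧ FinSupp d Φ}

/-- `M(d,ℕ)`: the projectivization of `M̃(d,ℕ)`, with the quotient topology. -/
abbrev MprojN (d : ℕ) := Quotient (scalingSetoid (MtN d))

/-- Transport along an equality of ranks. -/
def recast {m n : ℕ} (h : m = n) (Φ : (Fin m → ℕ) → ℝ) : (Fin n → ℕ) → ℝ :=
  fun y => Φ (y ∘ Fin.cast h)

/-! ### Matroid sliding -/

open Classical in
/-- The slide `Φ_t^A` of `Φ` along a tuple `A` of injective maps `E → F` with pairwise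
disjoint images, at a point `t` of the standard simplex. -/
noncomputable def slide {E F : Type*} {d n : ℕ} (A : Fin (n + 1) → E → F)
    (t : Fin (n + 1) → ℝ) (Φ : (Fin d → E) → ℝ) : (Fin d → F) → ℝ :=
  fun x =>
    if h : ∀ i, ∃ k e, x i = A k e then
      Φ (fun i => (h i).choose_spec.choose) *
        ∏ k : Fin (n + 1), t k ^ (Finset.univ.filter fun i : Fin d => ∃ e, x i = A k e).card
    else 0

/-! ### Direct sums -/

/-- `D` is the direct sum `Φ₁ ⊕ Φ₂`: the unique alternating function on
`(E₁ ⊔ E₂)^{d₁+d₂}` vanishing on tuples not having exactly `d₁` entries from `E₁` and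
`d₂` entries from `E₂`, and restricting to `(x,y) ↦ Φ₁(x)·Φ₂(y)` on `E₁^{d₁} × E₂^{d₂}`. -/
def IsDirectSum {E₁ E₂ : Type*} {d₁ d₂ : ℕ} (Φ₁ : (Fin d₁ → E₁) → ℝ)
    (Φ₂ : (Fin d₂ → E₂) → ℝ) (D : (Fin (d₁ + d₂) → E₁ ⊕ E₂) → ℝ) : Prop :=
  IsAlternating D ∧
  (∀ z : Fin (d₁ + d₂) → E₁ ⊕ E₂,
      ¬ ((Finset.univ.filter fun i => (z i).isLeft = true).card = d₁ ∧
          (Finset.univ.filter fun i => (z i).isRight = true).card = d₂) → D z = 0) ∧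
  ∀ (x : Fin d₁ → E₁) (y : Fin d₂ → E₂),
    D (Sum.elim (fun a => Sum.inl (x a)) (fun b => Sum.inr (y b)) ∘ finSumFinEquiv.symm) =
      Φ₁ x * Φ₂ y

/-! ### Tropical projective space -/

private lemma trop_add_cancel (w : WithTop ℝ) (lam : ℝ) :
    w = w + (lam : WithTop ℝ) + ((-lam : ℝ) : WithTop ℝ) := by
  induction w using WithTop.recTopCoe with
  | top => simp
  | coe r => rw [← WithTop.coe_add, ← WithTop.coe_add, WithTop.coe_inj]; ring

/-- The action of `(ℝ,+)` on `𝕋^n ∖ {(∞,…,∞)}` by simultaneous translation. -/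
def tropProjSetoid (n : ℕ) : Setoid {x : Fin n → WithTop ℝ // ∃ i, x i ≠ ⊤} where
  r x y := ∃ lam : ℝ, ∀ i, (y : Fin n → WithTop ℝ) i = x.1 i + (lam : WithTop ℝ)
  iseqv := by
    refine ⟨fun x => ⟨0, fun i => by simp⟩, ?_, ?_⟩
    · rintro x y ⟨lam, h⟩
      refine ⟨-lam, fun i => ?_⟩
      rw [h i]
      exact trop_add_cancel _ _
    · rintro x y z ⟨lam, h1⟩ ⟨mu, h2⟩
      refine ⟨lam + mu, fun i => ?_⟩
      rw [h2 i, h1 i, WithTop.coe_add, add_assoc]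

end

/-! ## Statement 16 -/

noncomputable section Statement16Aux

lemma tropToReal_top' : tropToReal (⊤ : WithTop ℝ) = 0 := rfl

lemma tropToReal_coe' (r : ℝ) : tropToReal (r : WithTop ℝ) = Real.exp (-r) := rfl

lemma tropToReal_nonneg' (w : WithTop ℝ) : 0 ≤ tropToReal w := by
  induction w using WithTop.recTopCoe with
  | top => exact le_refl 0
  | coe r => exact (Real.exp_pos _).le

lemma tropToReal_pos' (w : WithTop ℝ) (h : w ≠ ⊤) : 0 < tropToReal w := by
  induction w using WithTop.recTopCoe with
  | top => exact absurd rfl h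
  | coe r => exact Real.exp_pos _

lemma tropToReal_add_coe' (w : WithTop ℝ) (lam : ℝ) :
    tropToReal (w + (lam : WithTop ℝ)) = tropToReal w * Real.exp (-lam) := by
  induction w using WithTop.recTopCoe with
  | top => simp [tropToReal_top']
  | coe r =>
      rw [← WithTop.coe_add, tropToReal_coe', tropToReal_coe', ← Real.exp_add]
      ring_nf

/-- Sum of the exponential coordinates. -/
def tSum' (n : ℕ) (x : Fin n → WithTop ℝ) : ℝ := ∑ j, tropToReal (x j)

lemma tSum_pos' (n : ℕ) (x : Fin n → WithTop ℝ) (h : ∃ i, x i ≠ ⊤) : 0 < tSum' n x := by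
  obtain ⟨i, hi⟩ := h
  exact Finset.sum_pos' (fun j _ => tropToReal_nonneg' _)
    ⟨i, Finset.mem_univ i, tropToReal_pos' _ hi⟩

/-- The map to the simplex. -/
def Fmap' (n : ℕ) (x : Fin n → WithTop ℝ) : Fin n → ℝ :=
  fun i => tropToReal (x i) / tSum' n x

/-- The map from the simplex. -/
def Gmap' (n : ℕ) (t : Fin n → ℝ) : Fin n → WithTop ℝ :=
  fun i => if t i = 0 then ⊤ else (((-Real.log (t i)) : ℝ) : WithTop ℝ)

lemma tropToReal_Gmap' (n : ℕ) (t : Fin n → ℝ) (i : Fin n) (h : 0 ≤ t i) :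
    tropToReal (Gmap' n t i) = t i := by
  unfold Gmap'
  by_cases h0 : t i = 0
  · simp [h0, tropToReal_top']
  · rw [if_neg h0, tropToReal_coe', neg_neg, Real.exp_log (lt_of_le_of_ne h (Ne.symm h0))]

lemma Fmap_mem_simplex' (n : ℕ) (x : Fin n → WithTop ℝ) (h : ∃ i, x i ≠ ⊤) :
    Fmap' n x ∈ stdSimplex ℝ (Fin n) := by
  have hS := tSum_pos' n x h
  refine ⟨fun i => div_nonneg (tropToReal_nonneg' _) hS.le, ?_⟩
  unfold Fmap'
  rw [← Finset.sum_div]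
  exact div_self hS.ne'

end Statement16Aux

theorem statement16 (n : ℕ) (hn : 1 ≤ n) :
    letI : TopologicalSpace (WithTop ℝ) := TopologicalSpace.induced tropToReal inferInstance
    Nonempty (Quotient (tropProjSetoid n) ≃ₜ ↥(stdSimplex ℝ (Fin n))) := by
  letI : TopologicalSpace (WithTop ℝ) := TopologicalSpace.induced tropToReal inferInstance
  have contTrop : Continuous tropToReal := continuous_induced_dom
  -- the source subtype
  set T := {x : Fin n → WithTop ℝ // ∃ i, x i ≠ ⊤} with hT
  -- forward map on the subtype
  let Fsub : T → ↥(stdSimplex ℝ (Fin n)) :=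
    fun x => ⟨Fmap' n x.1, Fmap_mem_simplex' n x.1 x.2⟩
  -- F is invariant under the ℝ-action
  have Fresp : ∀ a b : T, (tropProjSetoid n).r a b → Fsub a = Fsub b := by
    rintro a b ⟨lam, hlam⟩
    apply Subtype.ext
    funext i
    have hb : ∀ j, tropToReal (b.1 j) = tropToReal (a.1 j) * Real.exp (-lam) := fun j => by
      rw [hlam j, tropToReal_add_coe']
    have hSb : tSum' n b.1 = tSum' n a.1 * Real.exp (-lam) := by
      unfold tSum'
      rw [Finset.sum_mul]
      exact Finset.sum_congr rfl fun j _ => hb j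
    show Fmap' n a.1 i = Fmap' n b.1 i
    unfold Fmap'
    rw [hb i, hSb, mul_div_mul_right _ _ (Real.exp_ne_zero _)]
  let eF : Quotient (tropProjSetoid n) → ↥(stdSimplex ℝ (Fin n)) := Quotient.lift Fsub Fresp
  -- backward map
  have Gex : ∀ t : ↥(stdSimplex ℝ (Fin n)), ∃ i, Gmap' n t.1 i ≠ ⊤ := by
    intro t
    have : ∃ i, t.1 i ≠ 0 := by
      by_contra hc
      push_neg at hc
      have := t.2.2
      rw [Finset.sum_congr rfl fun j _ => hc j] at this
      simp at this
    obtain ⟨i, hi⟩ := this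
    exact ⟨i, by simp [Gmap', hi]⟩
  let Gsub : ↥(stdSimplex ℝ (Fin n)) → T := fun t => ⟨Gmap' n t.1, Gex t⟩
  let eG : ↥(stdSimplex ℝ (Fin n)) → Quotient (tropProjSetoid n) :=
    fun t => Quotient.mk (tropProjSetoid n) (Gsub t)
  -- left inverse
  have linv : ∀ q, eG (eF q) = q := by
    intro q
    induction q using Quotient.inductionOn with
    | h x =>
        have hq : eF (Quotient.mk (tropProjSetoid n) x) = Fsub x := rfl
        show Quotient.mk (tropProjSetoid n) (Gsub (eF (Quotient.mk (tropProjSetoid n) x)))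
            = Quotient.mk (tropProjSetoid n) x
        rw [hq]
        apply Quotient.sound
        have hS := tSum_pos' n x.1 x.2
        refine ⟨-Real.log (tSum' n x.1), fun i => ?_⟩
        show x.1 i = Gmap' n (Fmap' n x.1) i + ((-Real.log (tSum' n x.1) : ℝ) : WithTop ℝ)
        cases hxi : x.1 i with
        | top =>
            have h0 : Fmap' n x.1 i = 0 := by
              simp [Fmap', hxi, tropToReal_top']
            simp [Gmap', h0]
        | coe r =>
            have hne : Fmap' n x.1 i = Real.exp (-r) / tSum' n x.1 := by
              simp [Fmap', hxi, tropToReal_coe']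
            have hne0 : Fmap' n x.1 i ≠ 0 := by
              rw [hne]
              positivity
            rw [show Gmap' n (Fmap' n x.1) i
                = (((-Real.log (Fmap' n x.1 i)) : ℝ) : WithTop ℝ) from if_neg hne0,
              ← WithTop.coe_add, WithTop.coe_inj, hne,
              Real.log_div (Real.exp_ne_zero _) hS.ne', Real.log_exp]
            ring
  -- right inverse
  have rinv : ∀ t, eF (eG t) = t := by
    intro t
    have hq : eF (eG t) = Fsub (Gsub t) := rfl
    rw [hq]
    apply Subtype.ext
    funext i
    have hS : tSum' n (Gmap' n t.1) = 1 := by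
      unfold tSum'
      rw [Finset.sum_congr rfl fun j _ => tropToReal_Gmap' n t.1 j (t.2.1 j)]
      exact t.2.2
    show Fmap' n (Gmap' n t.1) i = t.1 i
    unfold Fmap'
    rw [hS, tropToReal_Gmap' n t.1 i (t.2.1 i), div_one]
  -- continuity of the forward map
  have contFsub : Continuous Fsub := by
    apply Continuous.subtype_mk
    apply continuous_pi
    intro i
    have h1 : Continuous fun x : T => tropToReal (x.1 i) :=
      contTrop.comp ((continuous_apply i).comp continuous_subtype_val)
    have h2 : Continuous fun x : T => tSum' n x.1 := by
      unfold tSum'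
      exact continuous_finset_sum _ fun j _ =>
        contTrop.comp ((continuous_apply j).comp continuous_subtype_val)
    exact h1.div h2 fun x => (tSum_pos' n x.1 x.2).ne'
  have contEF : Continuous eF := contFsub.quotient_lift Fresp
  -- continuity of the backward map
  have contGsub : Continuous Gsub := by
    apply Continuous.subtype_mk
    apply continuous_pi
    intro i
    apply continuous_induced_rng.mpr
    have key : (tropToReal ∘ fun t : ↥(stdSimplex ℝ (Fin n)) => Gmap' n t.1 i)
        = fun t => t.1 i := by
      funext t
      exact tropToReal_Gmap' n t.1 i (t.2.1 i)
    rw [key]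
    exact (continuous_apply i).comp continuous_subtype_val
  have contEG : Continuous eG :=
    Continuous.comp continuous_quot_mk contGsub
  exact ⟨⟨⟨eF, eG, linv, rinv⟩, contEF, contEG⟩⟩
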